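/- Let d ≥ 1, let n ∈ ℝ^d be a unit vector and β ∈ ℝ^d. With 𝒩 := [[0_{d,d}, n],[nᵀ, β·n]] and ℳ_N := [[0_{d,d}, n],[−nᵀ, 0]], the following hold: (i) (ℳ_N v, v) = 0 for all v ∈ ℝ^{d+1}; (ii) Ker(ℳ_N − 𝒩) = { (v_σ, v_p) ∈ ℝ^{d+1} : 2 n·v_σ + (β·n) v_p = 0 } and Ker(ℳ_N + 𝒩) = { (w, 0) : w ∈ ℝ^d }; (iii) Ker(ℳ_N − 𝒩) + Ker(ℳ_N + 𝒩) = ℝ^{d+1}. -/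
import Mathlib


open Matrix

/-- Neumann boundary matrices of the Friedrichs form of the scalar
diffusion–advection–reaction problem: with `𝒩 = [[0, n],[nᵀ, β·n]]` and
`ℳ_N = [[0, n],[−nᵀ, 0]]` for a unit vector `n`:
(i) `(ℳ_N v, v) = 0` for all `v`;
(ii) `Ker(ℳ_N − 𝒩) = {v : 2 n·v_σ + (β·n) v_p = 0}` and `Ker(ℳ_N + 𝒩) = {(w, 0)}`;
(iii) `Ker(ℳ_N − 𝒩) + Ker(ℳ_N + 𝒩) = ℝ^{d+1}`. -/
theorem stmt7 (d : ℕ) (hd : 1 ≤ d) (n β : Fin d → ℝ) (hn : ∑ i, n i ^ 2 = 1) :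
    let N : Matrix (Fin d ⊕ Unit) (Fin d ⊕ Unit) ℝ :=
      Matrix.fromBlocks 0 (Matrix.of fun j _ => n j) (Matrix.of fun _ j => n j)
        (Matrix.of fun _ _ => β ⬝ᵥ n)
    let MN : Matrix (Fin d ⊕ Unit) (Fin d ⊕ Unit) ℝ :=
      Matrix.fromBlocks 0 (Matrix.of fun j _ => n j) (Matrix.of fun _ j => -n j)
        (Matrix.of fun _ _ => 0)
    (∀ v : Fin d ⊕ Unit → ℝ, MN.mulVec v ⬝ᵥ v = 0) ∧
    (∀ v : Fin d ⊕ Unit → ℝ, (MN - N).mulVec v = 0 ↔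
      2 * (∑ i, n i * v (Sum.inl i)) + (β ⬝ᵥ n) * v (Sum.inr ()) = 0) ∧
    (∀ v : Fin d ⊕ Unit → ℝ, (MN + N).mulVec v = 0 ↔ v (Sum.inr ()) = 0) ∧
    LinearMap.ker (MN - N).mulVecLin ⊔ LinearMap.ker (MN + N).mulVecLin = ⊤ := by
  intro N MN
  have hker1 : ∀ v : Fin d ⊕ Unit → ℝ, (MN - N).mulVec v = 0 ↔
      2 * (∑ i, n i * v (Sum.inl i)) + (β ⬝ᵥ n) * v (Sum.inr ()) = 0 := by
    intro v
    constructor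
    · intro h
      have h2 := congrFun h (Sum.inr ())
      simp [MN, N, Matrix.mulVec, dotProduct, Fintype.sum_sum_type,
        Finset.sum_mul, Finset.mul_sum] at h2 ⊢
      have key : ∑ x, (-n x - n x) * v (Sum.inl x) = -(∑ i, 2 * (n i * v (Sum.inl i))) := by
        rw [← Finset.sum_neg_distrib]
        exact Finset.sum_congr rfl fun i _ => by ring
      linarith [h2, key]
    · intro h
      funext i
      cases i with
      | inl j =>
        simp [MN, N, Matrix.mulVec, dotProduct, Fintype.sum_sum_type]
      | inr u =>
        simp [MN, N, Matrix.mulVec, dotProduct, Fintype.sum_sum_type,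
          Finset.sum_mul, Finset.mul_sum] at h ⊢
        have key : ∑ x, (-n x - n x) * v (Sum.inl x) = -(∑ i, 2 * (n i * v (Sum.inl i))) := by
          rw [← Finset.sum_neg_distrib]
          exact Finset.sum_congr rfl fun i _ => by ring
        linarith [h, key]
  have hker2 : ∀ v : Fin d ⊕ Unit → ℝ, (MN + N).mulVec v = 0 ↔ v (Sum.inr ()) = 0 := by
    intro v
    constructor
    · intro h
      obtain ⟨i, hi⟩ : ∃ i, n i ≠ 0 := by
        by_contra hc
        push_neg at hc
        simp [hc] at hn
      have h2 := congrFun h (Sum.inl i)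
      simp [MN, N, Matrix.mulVec, dotProduct, Fintype.sum_sum_type] at h2
      rcases h2 with h2 | h2
      · exact absurd h2 hi
      · exact h2
    · intro h
      funext i
      cases i with
      | inl j =>
        simp [MN, N, Matrix.mulVec, dotProduct, Fintype.sum_sum_type, h]
      | inr u =>
        simp [MN, N, Matrix.mulVec, dotProduct, Fintype.sum_sum_type, h]
  refine ⟨?_, hker1, hker2, ?_⟩
  · intro v
    simp [MN, Matrix.mulVec, dotProduct, Fintype.sum_sum_type, Finset.sum_mul,
      Finset.mul_sum]
    ring_nf
    rw [sub_eq_zero]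
    exact Finset.sum_congr rfl fun i _ => by ring
  · rw [eq_top_iff]
    intro v _
    set c : ℝ := -(β ⬝ᵥ n) * v (Sum.inr ()) / 2 with hc
    set w : Fin d ⊕ Unit → ℝ := Sum.elim (fun i => c * n i) (fun _ => v (Sum.inr ())) with hw
    have hw1 : w ∈ LinearMap.ker (MN - N).mulVecLin := by
      rw [LinearMap.mem_ker, Matrix.mulVecLin_apply]
      rw [hker1]
      have : ∑ i, n i * w (Sum.inl i) = c * ∑ i, n i ^ 2 := by
        rw [Finset.mul_sum]
        exact Finset.sum_congr rfl fun i _ => by simp [hw]; ring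
      rw [this, hn]
      simp [hw, hc]
      ring
    have hw2 : v - w ∈ LinearMap.ker (MN + N).mulVecLin := by
      rw [LinearMap.mem_ker, Matrix.mulVecLin_apply, hker2]
      simp [hw]
    exact Submodule.mem_sup.2 ⟨w, hw1, v - w, hw2, by abel⟩
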